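/- Let v : [0,1] → ℝ be a differentiable, concave, non-decreasing function with v(0) = 0 and v'(1) > 0, and suppose the function x ↦ x·v'(x) is non-decreasing on [0,1]. Then for every x ∈ (0,1], v(x) ≤ x·v'(x)·(1 + log(v'(0)/v'(1))). -/

import Mathlib

/-- For a differentiable, concave, non-decreasing valuation `v : [0,1] → ℝ` with
`v 0 = 0`, `v' 1 > 0`, and `x ↦ x·v'(x)` non-decreasing on `[0,1]`, we have
`v x ≤ x·v'(x)·(1 + log (v'(0)/v'(1)))` for every `x ∈ (0,1]`. -/
theorem concave_log_bound (v v' : ℝ → ℝ)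
    (hderiv : ∀ y ∈ Set.Icc (0 : ℝ) 1, HasDerivWithinAt v (v' y) (Set.Icc 0 1) y)
    (hconc : ConcaveOn ℝ (Set.Icc 0 1) v)
    (hmono : MonotoneOn v (Set.Icc 0 1))
    (hzero : v 0 = 0)
    (hderivpos : 0 < v' 1)
    (hxv' : MonotoneOn (fun y => y * v' y) (Set.Icc 0 1)) :
    ∀ x ∈ Set.Ioc (0 : ℝ) 1,
      v x ≤ x * v' x * (1 + Real.log (v' 0 / v' 1)) := by
  intro x hx
  obtain ⟨hx0, hx1⟩ := hx
  have hxI : x ∈ Set.Icc (0:ℝ) 1 := ⟨hx0.le, hx1⟩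
  have h0I : (0:ℝ) ∈ Set.Icc (0:ℝ) 1 := ⟨le_refl _, zero_le_one⟩
  have h1I : (1:ℝ) ∈ Set.Icc (0:ℝ) 1 := ⟨zero_le_one, le_refl _⟩
  -- v' is antitone on [0,1]
  have hanti : ∀ a ∈ Set.Icc (0:ℝ) 1, ∀ b ∈ Set.Icc (0:ℝ) 1, a ≤ b → v' b ≤ v' a := by
    intro a ha b hb hab
    rcases eq_or_lt_of_le hab with rfl | h
    · exact le_refl _
    · exact (hconc.le_slope_of_hasDerivWithinAt ha hb h (hderiv b hb)).trans
        (hconc.slope_le_of_hasDerivWithinAt ha hb h (hderiv a ha))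
  have hvx_pos : 0 < v' x := lt_of_lt_of_le hderivpos (hanti x hxI 1 h1I hx1)
  have hv0_pos : 0 < v' 0 := lt_of_lt_of_le hderivpos (hanti 0 h0I 1 h1I zero_le_one)
  have hxle0 : v' x ≤ v' 0 := hanti 0 h0I x hxI hx0.le
  set z := x * v' x / v' 0 with hzdef
  have hz0 : 0 < z := div_pos (mul_pos hx0 hvx_pos) hv0_pos
  have hzx : z ≤ x := by
    rw [hzdef, div_le_iff₀ hv0_pos]
    exact mul_le_mul_of_nonneg_left hxle0 hx0.le
  have hzI : z ∈ Set.Icc (0:ℝ) 1 := ⟨hz0.le, hzx.trans hx1⟩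
  -- tangent-line bound at 0: v z ≤ z * v' 0
  have hvz : v z ≤ z * v' 0 := by
    have h := hconc.slope_le_of_hasDerivWithinAt h0I hzI hz0 (hderiv 0 h0I)
    rw [slope_def_field, hzero, sub_zero, sub_zero, div_le_iff₀ hz0] at h
    linarith
  -- continuity of v on [0,1]
  have hvc : ContinuousOn v (Set.Icc (0:ℝ) 1) :=
    fun y hy => (hderiv y hy).continuousWithinAt
  -- monotonicity of g s = x * v' x * log s - v s on [z, x]
  have hsub : Set.Icc z x ⊆ Set.Icc (0:ℝ) 1 :=
    Set.Icc_subset_Icc hz0.le hx1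
  have hg : MonotoneOn (fun s => x * v' x * Real.log s - v s) (Set.Icc z x) := by
    apply monotoneOn_of_hasDerivWithinAt_nonneg (convex_Icc z x)
      (f' := fun s => x * v' x / s - v' s)
    · exact ((Real.continuousOn_log.mono (fun s hs =>
        ne_of_gt (lt_of_lt_of_le hz0 hs.1))).const_smul (x * v' x)).sub (hvc.mono hsub)
    · intro s hs
      rw [interior_Icc] at hs ⊢
      have hs0 : 0 < s := lt_of_lt_of_le hz0 hs.1.le
      have hsI : s ∈ Set.Icc (0:ℝ) 1 := ⟨hs0.le, hs.2.le.trans hx1⟩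
      have hvd : HasDerivAt v (v' s) s := by
        apply (hderiv s hsI).hasDerivAt
        exact Icc_mem_nhds hs0 (lt_of_lt_of_le hs.2 hx1)
      exact (((Real.hasDerivAt_log hs0.ne').const_mul (x * v' x)).sub hvd).hasDerivWithinAt
        |>.congr_deriv (by field_simp)
    · intro s hs
      rw [interior_Icc] at hs
      have hs0 : 0 < s := lt_of_lt_of_le hz0 hs.1.le
      have hsI : s ∈ Set.Icc (0:ℝ) 1 := ⟨hs0.le, hs.2.le.trans hx1⟩
      have := hxv' hsI hxI (hs.2.le)
      simp only at this
      rw [sub_nonneg, le_div_iff₀ hs0]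
      linarith [mul_comm (v' s) s]
  have hkey : v x - v z ≤ x * v' x * (Real.log x - Real.log z) := by
    have := hg (Set.left_mem_Icc.2 hzx) (Set.right_mem_Icc.2 hzx) hzx
    simp only at this
    linarith [this]
  -- log x - log z = log (v' 0 / v' x)
  have hlog : Real.log x - Real.log z = Real.log (v' 0 / v' x) := by
    rw [← Real.log_div hx0.ne' hz0.ne']
    congr 1
    rw [hzdef]
    field_simp
  have hzv0 : z * v' 0 = x * v' x := by
    rw [hzdef]; field_simp
  have h1 : v x ≤ x * v' x * (1 + Real.log (v' 0 / v' x)) := by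
    rw [hlog] at hkey
    have : v x ≤ z * v' 0 + x * v' x * Real.log (v' 0 / v' x) := by linarith
    rw [hzv0] at this
    linarith [this]
  refine h1.trans ?_
  have hloglog : Real.log (v' 0 / v' x) ≤ Real.log (v' 0 / v' 1) := by
    apply Real.log_le_log (div_pos hv0_pos hvx_pos)
    exact div_le_div_of_nonneg_left hv0_pos.le hderivpos (hanti x hxI 1 h1I hx1)
  have hxvnn : 0 ≤ x * v' x := (mul_pos hx0 hvx_pos).le
  nlinarith [hloglog, hxvnn]
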